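/- For every real x and every t ≠ 0, the Dunkl operator in the variable t applied to the function t ↦ e_μ(xt) satisfies (Λ_{μ,t} e_μ(x·))(t) = x e_μ(xt). -/

import Mathlib

open scoped BigOperators

/-- The Dunkl coefficients γ_μ(i). -/
noncomputable def gammaMu (μ : ℝ) (i : ℕ) : ℝ :=
  if Even i then
    2 ^ i * (Nat.factorial (i / 2)) *
      Real.Gamma (((i / 2 : ℕ) : ℝ) + μ + 1 / 2) / Real.Gamma (μ + 1 / 2)
  else
    2 ^ i * (Nat.factorial (i / 2)) *
      Real.Gamma (((i / 2 : ℕ) : ℝ) + μ + 3 / 2) / Real.Gamma (μ + 1 / 2)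

/-- θ_i = 0 if i is even, 1 if i is odd. -/
noncomputable def thetaFn (i : ℕ) : ℝ := if Even i then 0 else 1

/-- The Dunkl exponential e_μ(x) = Σ x^i / γ_μ(i). -/
noncomputable def dunklExp (μ : ℝ) (x : ℝ) : ℝ := ∑' i : ℕ, x ^ i / gammaMu μ i

/-- The Dunkl operator (Λ_μ f)(x) = f'(x) + μ (f(x) - f(-x)) / x. -/
noncomputable def dunklOp (μ : ℝ) (f : ℝ → ℝ) (x : ℝ) : ℝ :=
  deriv f x + μ * (f x - f (-x)) / x

/-- Q(t) = Σ c_i t^i / γ_μ(i). -/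
noncomputable def Qf (μ : ℝ) (c : ℕ → ℝ) (t : ℝ) : ℝ := ∑' i : ℕ, c i * t ^ i / gammaMu μ i

/-- The Dunkl–Appell polynomials q_i(x) = Σ_{j=0}^i (γ_μ(i)/(γ_μ(j)γ_μ(i-j))) c_{i-j} x^j. -/
noncomputable def qPoly (μ : ℝ) (c : ℕ → ℝ) (i : ℕ) (x : ℝ) : ℝ :=
  ∑ j ∈ Finset.range (i + 1),
    gammaMu μ i / (gammaMu μ j * gammaMu μ (i - j)) * c (i - j) * x ^ j

/-- The operators K_n^μ(f;x). -/
noncomputable def Kop (μ : ℝ) (c : ℕ → ℝ) (n : ℕ) (f : ℝ → ℝ) (x : ℝ) : ℝ :=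
  1 / (Qf μ c 1 * dunklExp μ (n * x)) *
    ∑' i : ℕ, qPoly μ c i (n * x) / gammaMu μ i * f (((i : ℝ) + 2 * μ * thetaFn i) / n)

lemma gammaMu_pos (μ : ℝ) (hμ : μ + 1 / 2 > 0) (i : ℕ) : 0 < gammaMu μ i := by
  have h0 : (0:ℝ) < Real.Gamma (μ + 1/2) := Real.Gamma_pos_of_pos hμ
  have hc : (0:ℝ) ≤ ((i / 2 : ℕ) : ℝ) := Nat.cast_nonneg _
  unfold gammaMu
  split
  · have h1 : (0:ℝ) < Real.Gamma (((i / 2 : ℕ) : ℝ) + μ + 1 / 2) :=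
      Real.Gamma_pos_of_pos (by linarith)
    have h2 : (0:ℝ) < (Nat.factorial (i / 2) : ℝ) := by positivity
    positivity
  · have h1 : (0:ℝ) < Real.Gamma (((i / 2 : ℕ) : ℝ) + μ + 3 / 2) :=
      Real.Gamma_pos_of_pos (by linarith)
    have h2 : (0:ℝ) < (Nat.factorial (i / 2) : ℝ) := by positivity
    positivity

lemma gammaMu_zero (μ : ℝ) (hμ : μ + 1 / 2 > 0) : gammaMu μ 0 = 1 := by
  have h0 : Real.Gamma (μ + 1/2) ≠ 0 := ne_of_gt (Real.Gamma_pos_of_pos hμ)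
  unfold gammaMu
  norm_num
  exact h0

lemma gammaMu_succ (μ : ℝ) (hμ : μ + 1 / 2 > 0) (i : ℕ) :
    gammaMu μ (i + 1) = ((i : ℝ) + 1 + 2 * μ * thetaFn (i + 1)) * gammaMu μ i := by
  rcases Nat.even_or_odd i with ⟨k, rfl⟩ | ⟨k, rfl⟩
  · -- i = k + k, i+1 odd
    have he : Even (k + k) := ⟨k, rfl⟩
    have ho : ¬ Even (k + k + 1) := by simp [Nat.even_add_one, he]
    have hd1 : (k + k + 1) / 2 = k := by omega
    have hd2 : (k + k) / 2 = k := by omega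
    have harg : (0:ℝ) < (k:ℝ) + μ + 1/2 := by
      have : (0:ℝ) ≤ (k:ℝ) := Nat.cast_nonneg _
      linarith
    have hG : Real.Gamma ((k:ℝ) + μ + 3/2) = ((k:ℝ) + μ + 1/2) * Real.Gamma ((k:ℝ) + μ + 1/2) := by
      rw [show (k:ℝ) + μ + 3/2 = ((k:ℝ) + μ + 1/2) + 1 by ring,
        Real.Gamma_add_one (ne_of_gt harg)]
    simp only [gammaMu, thetaFn, if_pos he, if_neg ho, hd1, hd2]
    rw [hG]
    push_cast
    ring
  · -- i = 2k+1, i+1 = 2k+2 even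
    have ho : ¬ Even (2 * k + 1) := by simp [Nat.even_add_one]
    have he : Even (2 * k + 1 + 1) := by
      refine ⟨k + 1, by omega⟩
    have hd1 : (2 * k + 1 + 1) / 2 = k + 1 := by omega
    have hd2 : (2 * k + 1) / 2 = k := by omega
    simp only [gammaMu, thetaFn, if_pos he, if_neg ho, hd1, hd2]
    have hG : Real.Gamma (((k+1:ℕ):ℝ) + μ + 1/2) = Real.Gamma ((k:ℝ) + μ + 3/2) := by
      congr 1; push_cast; ring
    rw [hG, Nat.factorial_succ]
    push_cast
    ring

lemma gammaMu_ge (μ : ℝ) (hμ : μ + 1 / 2 > 0) (i : ℕ) :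
    (min 1 (1 + 2 * μ)) ^ i * (Nat.factorial i : ℝ) ≤ gammaMu μ i := by
  have hε1 : min 1 (1 + 2*μ) ≤ 1 := min_le_left _ _
  have hε2 : min 1 (1 + 2*μ) ≤ 1 + 2*μ := min_le_right _ _
  have hε0 : 0 < min 1 (1 + 2*μ) := lt_min one_pos (by linarith)
  induction i with
  | zero => simp [gammaMu_zero μ hμ]
  | succ i ih =>
    rw [gammaMu_succ μ hμ i]
    have hfac : (0:ℝ) < (Nat.factorial i : ℝ) := by positivity
    have hstep : min 1 (1 + 2*μ) * ((i:ℝ) + 1) ≤ (i : ℝ) + 1 + 2 * μ * thetaFn (i + 1) := by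
      unfold thetaFn
      have hi : (0:ℝ) ≤ (i:ℝ) := Nat.cast_nonneg _
      split
      · nlinarith
      · rcases le_or_gt μ 0 with h | h
        · nlinarith
        · nlinarith
    calc (min 1 (1 + 2*μ)) ^ (i+1) * (Nat.factorial (i+1) : ℝ)
        = (min 1 (1 + 2*μ) * ((i:ℝ) + 1)) * ((min 1 (1 + 2*μ)) ^ i * (Nat.factorial i : ℝ)) := by
          rw [Nat.factorial_succ]; push_cast; ring
      _ ≤ ((i : ℝ) + 1 + 2 * μ * thetaFn (i + 1)) * gammaMu μ i := by
          apply mul_le_mul hstep ih (by positivity)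
          have : (0:ℝ) ≤ (i:ℝ) + 1 := by positivity
          linarith [hstep, mul_pos hε0 (show (0:ℝ) < (i:ℝ)+1 by positivity)]

lemma summable_master (μ : ℝ) (hμ : μ + 1 / 2 > 0) (c : ℝ) :
    Summable (fun i : ℕ => ((i:ℝ) + 1) * |c| ^ i / gammaMu μ i) := by
  set ε := min 1 (1 + 2*μ) with hεdef
  have hε0 : 0 < ε := lt_min one_pos (by linarith)
  refine Summable.of_nonneg_of_le (fun i => ?_) (fun i => ?_)
    (Real.summable_pow_div_factorial (2 * |c| / ε))
  · have hγ : 0 < gammaMu μ i := gammaMu_pos μ hμ i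
    positivity
  have hγ : 0 < gammaMu μ i := gammaMu_pos μ hμ i
  have hfac : (0:ℝ) < (Nat.factorial i : ℝ) := by positivity
  have hge : ε ^ i * (Nat.factorial i : ℝ) ≤ gammaMu μ i := gammaMu_ge μ hμ i
  have h1 : ((i:ℝ) + 1) * |c| ^ i / gammaMu μ i ≤ ((i:ℝ) + 1) * |c| ^ i / (ε ^ i * (Nat.factorial i : ℝ)) := by
    apply div_le_div_of_nonneg_left (by positivity) (by positivity) hge
  have h2 : ((i:ℝ) + 1) ≤ (2:ℝ) ^ i := by
    have := Nat.lt_two_pow_self (n := i)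
    exact_mod_cast Nat.succ_le_of_lt this
  have h3 : ((i:ℝ) + 1) * |c| ^ i / (ε ^ i * (Nat.factorial i : ℝ))
      ≤ (2:ℝ) ^ i * |c| ^ i / (ε ^ i * (Nat.factorial i : ℝ)) := by
    gcongr
  have h4 : (2 * |c| / ε) ^ i / (Nat.factorial i : ℝ)
      = (2:ℝ) ^ i * |c| ^ i / (ε ^ i * (Nat.factorial i : ℝ)) := by
    rw [div_pow, mul_pow]; ring
  rw [h4]
  exact le_trans h1 h3

lemma summable_basic (μ : ℝ) (hμ : μ + 1 / 2 > 0) (c : ℝ) :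
    Summable (fun i : ℕ => c ^ i / gammaMu μ i) := by
  apply Summable.of_norm_bounded (summable_master μ hμ c)
  intro i
  have hγ : 0 < gammaMu μ i := gammaMu_pos μ hμ i
  rw [norm_div, Real.norm_eq_abs, Real.norm_eq_abs, abs_pow, abs_of_pos hγ]
  have h1 : ((1:ℝ)) ≤ (i:ℝ) + 1 := by
    have : (0:ℝ) ≤ (i:ℝ) := Nat.cast_nonneg i
    linarith
  have : |c| ^ i / gammaMu μ i ≤ ((i:ℝ) + 1) * |c| ^ i / gammaMu μ i := by
    gcongr; nlinarith [pow_nonneg (abs_nonneg c) i]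
  linarith

/-- the Dunkl operator in t applied to t ↦ e_μ(xt). -/
theorem dunklOp_dunklExp (μ : ℝ) (hμ : μ + 1 / 2 > 0) (x : ℝ) (t : ℝ) (ht : t ≠ 0) :
    dunklOp μ (fun s => dunklExp μ (x * s)) t = x * dunklExp μ (x * t) := by
  have hγpos : ∀ i, 0 < gammaMu μ i := gammaMu_pos μ hμ
  set M : ℝ := |x| * (|t| + 1) + 1 with hM
  have hM1 : 1 ≤ M := by
    have h1 : (0:ℝ) ≤ |x| * (|t| + 1) :=
      mul_nonneg (abs_nonneg x) (by linarith [abs_nonneg t])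
    linarith
  have hM0 : 0 < M := by linarith
  -- derivative of each term
  set f : ℕ → ℝ → ℝ := fun i s => (x * s) ^ i / gammaMu μ i with hf
  set f' : ℕ → ℝ → ℝ := fun i s => (i:ℝ) * (x * s) ^ (i - 1) * x / gammaMu μ i with hf'
  set u : ℕ → ℝ := fun i => |x| * (((i:ℝ) + 1) * M ^ i / gammaMu μ i) with hu
  have hu_sum : Summable u := by
    have := (summable_master μ hμ M).mul_left |x|
    simpa [hu, abs_of_pos hM0] using this
  set s : Set ℝ := Metric.ball (0:ℝ) (|t| + 1) with hs
  have hso : IsOpen s := Metric.isOpen_ball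
  have hsc : IsPreconnected s := (convex_ball (0:ℝ) (|t|+1)).isPreconnected
  have hts : t ∈ s := by
    simp only [hs, Metric.mem_ball, Real.dist_eq, sub_zero]
    linarith [abs_nonneg t]
  have hderiv : ∀ i : ℕ, ∀ y ∈ s, HasDerivAt (f i) (f' i y) y := by
    intro i y _
    have h1 : HasDerivAt (fun s : ℝ => x * s) x y := by
      simpa using (hasDerivAt_id y).const_mul x
    have h2 : HasDerivAt (fun s : ℝ => (x * s) ^ i) ((i:ℝ) * (x * y) ^ (i - 1) * x) y :=
      (hasDerivAt_pow i (x * y)).comp y h1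
    simpa [hf, hf'] using h2.div_const (gammaMu μ i)
  have hbound : ∀ i : ℕ, ∀ y ∈ s, ‖f' i y‖ ≤ u i := by
    intro i y hy
    have hγ := hγpos i
    have hxy : |x * y| ≤ M := by
      have hyb : |y| < |t| + 1 := by
        simpa [hs, Metric.mem_ball, Real.dist_eq, sub_zero] using hy
      rw [abs_mul]
      have h1 : |x| * |y| ≤ |x| * (|t| + 1) :=
        mul_le_mul_of_nonneg_left (le_of_lt hyb) (abs_nonneg x)
      linarith
    have hpow : |x * y| ^ (i - 1) ≤ M ^ i := by
      calc |x * y| ^ (i - 1) ≤ M ^ (i - 1) :=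
            pow_le_pow_left₀ (abs_nonneg _) hxy _
        _ ≤ M ^ i := pow_le_pow_right₀ hM1 (Nat.sub_le i 1)
    have heq : ‖f' i y‖ = (i:ℝ) * |x * y| ^ (i - 1) * |x| / gammaMu μ i := by
      simp only [hf', Real.norm_eq_abs, abs_div, abs_mul, abs_pow, Nat.abs_cast,
        abs_of_pos hγ]
    rw [heq]
    show (i:ℝ) * |x * y| ^ (i - 1) * |x| / gammaMu μ i
        ≤ |x| * (((i:ℝ) + 1) * M ^ i / gammaMu μ i)
    rw [show |x| * (((i:ℝ) + 1) * M ^ i / gammaMu μ i)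
        = ((i:ℝ) + 1) * M ^ i * |x| / gammaMu μ i by ring]
    gcongr
    have : (0:ℝ) ≤ (i:ℝ) := Nat.cast_nonneg i
    linarith
  have hf0 : Summable fun i => f i t := summable_basic μ hμ (x * t)
  have hD : HasDerivAt (fun z => ∑' i : ℕ, f i z) (∑' i : ℕ, f' i t) t :=
    hasDerivAt_tsum_of_isPreconnected hu_sum hso hsc hderiv hbound hts hf0 hts
  have hDF : HasDerivAt (fun s => dunklExp μ (x * s)) (∑' i : ℕ, f' i t) t := hD
  -- summabilities
  have hsumD : Summable fun i => f' i t :=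
    Summable.of_norm_bounded hu_sum (fun i => hbound i t hts)
  have hsumA : Summable fun i : ℕ => (x * t) ^ i / gammaMu μ i := summable_basic μ hμ (x * t)
  have hsumB : Summable fun i : ℕ => (x * (-t)) ^ i / gammaMu μ i := summable_basic μ hμ (x * (-t))
  have hsumAB : Summable fun i : ℕ => (μ / t) * ((x * t) ^ i / gammaMu μ i - (x * (-t)) ^ i / gammaMu μ i) :=
    (hsumA.sub hsumB).mul_left _
  -- put everything into one tsum
  rw [dunklOp, hDF.deriv]
  simp only [dunklExp]
  rw [← Summable.tsum_sub hsumA hsumB]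
  rw [show μ * (∑' i : ℕ, ((x * t) ^ i / gammaMu μ i - (x * (-t)) ^ i / gammaMu μ i)) / t
      = (μ / t) * ∑' i : ℕ, ((x * t) ^ i / gammaMu μ i - (x * (-t)) ^ i / gammaMu μ i) by ring]
  rw [← tsum_mul_left]
  rw [← Summable.tsum_add hsumD hsumAB]
  set g : ℕ → ℝ := fun i => f' i t + (μ / t) * ((x * t) ^ i / gammaMu μ i - (x * (-t)) ^ i / gammaMu μ i) with hg
  have hsumg : Summable g := hsumD.add hsumAB
  have hg0 : g 0 = 0 := by
    simp [hg, hf']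
  have hgsucc : ∀ i : ℕ, g (i + 1) = x * ((x * t) ^ i / gammaMu μ i) := by
    intro i
    have hγ := hγpos i
    have hγ' := hγpos (i + 1)
    have hrec := gammaMu_succ μ hμ i
    have hxt : (x * (-t)) ^ (i+1) = (-1 : ℝ) ^ (i+1) * (x * t) ^ (i+1) := by
      rw [show x * (-t) = (-1 : ℝ) * (x * t) by ring, mul_pow]
    rcases Nat.even_or_odd (i + 1) with he | ho
    · have hθ : thetaFn (i+1) = 0 := by simp [thetaFn, he]
      have hneg : ((-1 : ℝ)) ^ (i+1) = 1 := he.neg_one_pow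
      have hγr : gammaMu μ (i+1) = ((i:ℝ) + 1) * gammaMu μ i := by
        rw [hrec, hθ]; ring
      simp only [hg, hf', hxt, hneg, one_mul, Nat.add_sub_cancel]
      rw [hγr]
      have hi1 : ((i:ℝ) + 1) ≠ 0 := by positivity
      field_simp
      push_cast
      ring
    · have hθ : thetaFn (i+1) = 1 := by simp [thetaFn, Nat.not_even_iff_odd.mpr ho]
      have hneg : ((-1 : ℝ)) ^ (i+1) = -1 := ho.neg_one_pow
      have hγr : gammaMu μ (i+1) = ((i:ℝ) + 1 + 2 * μ) * gammaMu μ i := by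
        rw [hrec, hθ]; ring
      have hcoef : (0:ℝ) < (i:ℝ) + 1 + 2 * μ := by
        have : (0:ℝ) ≤ (i:ℝ) := Nat.cast_nonneg _
        linarith
      simp only [hg, hf', hxt, hneg, Nat.add_sub_cancel]
      rw [hγr]
      have hp : (x * t) ^ (i+1) = (x * t) ^ i * (x * t) := pow_succ _ _
      rw [hp]
      field_simp
      push_cast
      ring
  rw [Summable.tsum_eq_zero_add hsumg, hg0, zero_add]
  calc ∑' i : ℕ, g (i + 1) = ∑' i : ℕ, x * ((x * t) ^ i / gammaMu μ i) := by
        exact tsum_congr hgsucc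
    _ = x * ∑' i : ℕ, (x * t) ^ i / gammaMu μ i := tsum_mul_left
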